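/- Consider the SAP iteration: let A be a real m×n matrix, x ∈ ℝⁿ, b = A·x with Aᵀ·b ≠ 0, and let A₁, …, A_k be submatrices of A formed by groups of rows of A whose union comprises all rows of A. Define x₀ = (‖b‖²/‖Aᵀ·b‖²)·(Aᵀ·b), and for each s ≥ 0 define recursively p⁽ˢ⁾₀ = x_s and, for i = 1, …, k, p⁽ˢ⁾ᵢ = the orthogonal projection of x onto the subspace spanned by p⁽ˢ⁾ᵢ₋₁ together with the rows of Aᵢ; set x_{s+1} = p⁽ˢ⁾_k. Then the sequence (x_s) converges to x̄, the orthogonal projection of x onto the row space of A. In particular, if m = n and A is invertible, then (x_s) converges to x itself. -/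

import Mathlib

open scoped RealInnerProductSpace
open Matrix Filter Topology

/-- The subspace spanned by a vector `q` together with the rows of the block of
`A` indexed by `g i`. -/
def sapBlockSubspace {m n : ℕ} (A : Matrix (Fin m) (Fin n) ℝ)
    (g : ℕ → Set (Fin m)) (q : EuclideanSpace ℝ (Fin n)) (i : ℕ) :
    Submodule ℝ (EuclideanSpace ℝ (Fin n)) :=
  Submodule.span ℝ (insert q ((fun j : Fin m => (WithLp.toLp 2 (A j) : EuclideanSpace ℝ (Fin n))) '' g i))

/-- the SAP iterates `(x_s)` converge to `x̄`, the orthogonal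
projection of `x` onto the row space of `A`; in particular, if `m = n` and `A`
is invertible, they converge to `x` itself. -/
theorem sap_convergence {m n k : ℕ}
    (A : Matrix (Fin m) (Fin n) ℝ) (x : EuclideanSpace ℝ (Fin n))
    (b : EuclideanSpace ℝ (Fin m)) (hb : b = A.mulVec x)
    (Atb : EuclideanSpace ℝ (Fin n)) (hAtb : Atb = Aᵀ.mulVec b) (hne : Atb ≠ 0)
    (g : ℕ → Set (Fin m)) (hcover : ∀ j : Fin m, ∃ i < k, j ∈ g i)
    (xseq : ℕ → EuclideanSpace ℝ (Fin n))
    (h0 : xseq 0 = (‖b‖ ^ 2 / ‖Atb‖ ^ 2) • Atb)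
    (hstep : ∀ s : ℕ, ∃ p : ℕ → EuclideanSpace ℝ (Fin n),
      p 0 = xseq s ∧ p k = xseq (s + 1) ∧
      ∀ i < k, p (i + 1) ∈ sapBlockSubspace A g (p i) i ∧
        ∀ w ∈ sapBlockSubspace A g (p i) i, ⟪x - p (i + 1), w⟫ = 0)
    (xbar : EuclideanSpace ℝ (Fin n))
    (hxbarmem : xbar ∈ Submodule.span ℝ
      (Set.range fun j : Fin m => (WithLp.toLp 2 (A j) : EuclideanSpace ℝ (Fin n))))
    (hxbarorth : ∀ w ∈ Submodule.span ℝ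
      (Set.range fun j : Fin m => (WithLp.toLp 2 (A j) : EuclideanSpace ℝ (Fin n))),
      ⟪x - xbar, w⟫ = 0) :
    Tendsto xseq atTop (𝓝 xbar) ∧
      (∀ hmn : m = n, IsUnit (A.submatrix id (Fin.cast hmn)) →
        Tendsto xseq atTop (𝓝 x)) := by
  classical
  set W : Submodule ℝ (EuclideanSpace ℝ (Fin n)) :=
    Submodule.span ℝ (Set.range fun j : Fin m => (WithLp.toLp 2 (A j) : EuclideanSpace ℝ (Fin n))) with hWdef
  have hrow : ∀ j : Fin m, (WithLp.toLp 2 (A j) : EuclideanSpace ℝ (Fin n)) ∈ W :=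
    fun j => Submodule.subset_span ⟨j, rfl⟩
  have hmulW : ∀ c : EuclideanSpace ℝ (Fin m),
      (WithLp.toLp 2 (Aᵀ.mulVec c) : EuclideanSpace ℝ (Fin n)) ∈ W := by
    intro c
    have hrepr : (WithLp.toLp 2 (Aᵀ.mulVec c) : EuclideanSpace ℝ (Fin n))
        = ∑ i : Fin m, c i • (WithLp.toLp 2 (A i) : EuclideanSpace ℝ (Fin n)) := by
      ext j
      simp [Matrix.mulVec, dotProduct, Matrix.transpose_apply, Finset.sum_apply,
        mul_comm]
    rw [hrepr]
    exact Submodule.sum_mem _ fun i _ => Submodule.smul_mem _ _ (hrow i)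
  -- m > 0, hence k > 0
  have hm : 0 < m := by
    rcases Nat.eq_zero_or_pos m with rfl | h
    · exfalso
      apply hne
      ext j
      rw [hAtb]
      simp [Matrix.mulVec, dotProduct]
    · exact h
  have hk : 0 < k := by
    obtain ⟨i, hik, _⟩ := hcover ⟨0, hm⟩
    omega
  choose P hP0 hPk hst using hstep
  -- subspaces sit inside W
  have hsub_le : ∀ (q : EuclideanSpace ℝ (Fin n)) (i : ℕ), q ∈ W →
      sapBlockSubspace A g q i ≤ W := by
    intro q i hq
    apply Submodule.span_le.2
    intro w hw
    rcases Set.mem_insert_iff.1 hw with rfl | ⟨j, _, rfl⟩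
    · exact hq
    · exact hrow j
  have hPW : ∀ s, xseq s ∈ W → ∀ i, i ≤ k → P s i ∈ W := by
    intro s hs i
    induction i with
    | zero => intro _; rw [hP0]; exact hs
    | succ i ih =>
      intro hik
      exact hsub_le _ _ (ih (by omega)) ((hst s i (by omega)).1)
  have hxW : ∀ s, xseq s ∈ W := by
    intro s
    induction s with
    | zero => rw [h0]; exact Submodule.smul_mem _ _ (by rw [show Atb = WithLp.toLp 2 (Aᵀ *ᵥ b.ofLp) by rw [← hAtb]]; exact hmulW b)
    | succ s ih => rw [← hPk s]; exact hPW s ih k le_rfl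
  -- Pythagoras at each inner step
  have pyth : ∀ s, ∀ i < k,
      ‖x - P s i‖ ^ 2 = ‖x - P s (i + 1)‖ ^ 2 + ‖P s (i + 1) - P s i‖ ^ 2 := by
    intro s i hik
    obtain ⟨hmem, horth⟩ := hst s i hik
    have hq : P s i ∈ sapBlockSubspace A g (P s i) i :=
      Submodule.subset_span (Set.mem_insert _ _)
    have hd : ⟪x - P s (i + 1), P s (i + 1) - P s i⟫ = 0 :=
      horth _ (Submodule.sub_mem _ hmem hq)
    have hdecomp : x - P s i = (x - P s (i + 1)) + (P s (i + 1) - P s i) := by abel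
    rw [hdecomp, norm_add_sq_real, hd]
    ring
  have hmono : ∀ s i j, i ≤ j → j ≤ k → ‖x - P s j‖ ^ 2 ≤ ‖x - P s i‖ ^ 2 := by
    intro s i j hij hjk
    induction j with
    | zero =>
      have : i = 0 := by omega
      subst this; exact le_rfl
    | succ j ih =>
      rcases Nat.lt_or_ge i (j + 1) with h | h
      · have h1 := ih (by omega) (by omega)
        have h2 := pyth s j (by omega)
        nlinarith [sq_nonneg ‖P s (j + 1) - P s j‖]
      · have : i = j + 1 := by omega
        subst this; exact le_rfl
  set f : ℕ → ℝ := fun s => ‖x - xseq s‖ ^ 2 with hfdef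
  have hf_succ : ∀ s, f (s + 1) ≤ f s := by
    intro s
    have := hmono s 0 k (Nat.zero_le _) le_rfl
    rw [hP0, hPk] at this
    simpa [hfdef] using this
  have hf_anti : Antitone f := antitone_nat_of_succ_le hf_succ
  have hf_bdd : BddBelow (Set.range f) := ⟨0, by rintro y ⟨s, rfl⟩; positivity⟩
  have hfL : Tendsto f atTop (𝓝 (⨅ s, f s)) := tendsto_atTop_ciInf hf_anti hf_bdd
  have hdiff0 : Tendsto (fun s => f s - f (s + 1)) atTop (𝓝 0) := by
    have h2 : Tendsto (fun s => f (s + 1)) atTop (𝓝 (⨅ s, f s)) :=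
      hfL.comp (tendsto_add_atTop_nat 1)
    simpa using hfL.sub h2
  have hPdiff : ∀ i, i < k →
      Tendsto (fun s => P s (i + 1) - P s i) atTop (𝓝 0) := by
    intro i hik
    rw [tendsto_zero_iff_norm_tendsto_zero]
    have hsq : Tendsto (fun s => ‖P s (i + 1) - P s i‖ ^ 2) atTop (𝓝 0) := by
      refine squeeze_zero (fun s => sq_nonneg _) (fun s => ?_) hdiff0
      have h1 := hmono s 0 i (Nat.zero_le _) (by omega)
      have h2 := hmono s (i + 1) k (by omega) le_rfl
      have h3 := pyth s i hik
      have e0 : ‖x - P s 0‖ ^ 2 = f s := by rw [hP0]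
      have ek : ‖x - P s k‖ ^ 2 = f (s + 1) := by rw [hPk]
      linarith
    have hsqrt := (Real.continuous_sqrt.tendsto 0).comp hsq
    have heq : (fun s => ‖P s (i + 1) - P s i‖)
        = (fun r => Real.sqrt r) ∘ (fun s => ‖P s (i + 1) - P s i‖ ^ 2) := by
      funext s
      simp [Real.sqrt_sq, norm_nonneg]
    rw [heq]
    simpa using hsqrt
  have hPx : ∀ i, i ≤ k → Tendsto (fun s => P s i - xseq s) atTop (𝓝 0) := by
    intro i
    induction i with
    | zero =>
      intro _
      have : (fun s => P s 0 - xseq s) = fun _ => 0 := by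
        funext s; rw [hP0]; simp
      rw [this]; exact tendsto_const_nhds
    | succ i ih =>
      intro hik
      have h1 := ih (by omega)
      have h2 := hPdiff i (by omega)
      have := h2.add h1
      simp only [add_zero] at this
      convert this using 2 with s
      abel
  have hmain : Tendsto xseq atTop (𝓝 xbar) := by
    apply tendsto_of_subseq_tendsto
    intro ns hns
    have hb0 : ∀ s, xseq s ∈ Metric.closedBall x ‖x - xseq 0‖ := by
      intro s
      have h1 : f s ≤ f 0 := hf_anti (Nat.zero_le s)
      rw [Metric.mem_closedBall, dist_comm, dist_eq_norm]
      have hn1 : (0:ℝ) ≤ ‖x - xseq s‖ := norm_nonneg _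
      have hn2 : (0:ℝ) ≤ ‖x - xseq 0‖ := norm_nonneg _
      simp only [hfdef] at h1
      nlinarith
    obtain ⟨y, hy_mem, φ, hφ, hyt⟩ :=
      (isCompact_closedBall x ‖x - xseq 0‖).tendsto_subseq (fun t => hb0 (ns t))
    refine ⟨φ, ?_⟩
    have hns' : Tendsto (fun t => ns (φ t)) atTop atTop := hns.comp hφ.tendsto_atTop
    have hyt' : Tendsto (fun t => xseq (ns (φ t))) atTop (𝓝 y) := hyt
    have hyW : y ∈ W :=
      W.closed_of_finiteDimensional.mem_of_tendsto hyt'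
        (Eventually.of_forall fun t => hxW _)
    have horthy : ∀ j : Fin m, ⟪x - y, (WithLp.toLp 2 (A j) : EuclideanSpace ℝ (Fin n))⟫ = 0 := by
      intro j
      obtain ⟨i, hik, hji⟩ := hcover j
      have hz : ∀ s, ⟪x - P s (i + 1), (WithLp.toLp 2 (A j) : EuclideanSpace ℝ (Fin n))⟫ = 0 := fun s =>
        (hst s i hik).2 _ (Submodule.subset_span (Set.mem_insert_of_mem _ ⟨j, hji, rfl⟩))
      have h1 : Tendsto (fun t => P (ns (φ t)) (i + 1) - xseq (ns (φ t))) atTop (𝓝 0) :=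
        (hPx (i + 1) (by omega)).comp hns'
      have h2 : Tendsto (fun t => P (ns (φ t)) (i + 1)) atTop (𝓝 y) := by
        have := h1.add hyt'
        simpa using this
      have h3 : Tendsto
          (fun t => ⟪x - P (ns (φ t)) (i + 1), (WithLp.toLp 2 (A j) : EuclideanSpace ℝ (Fin n))⟫)
          atTop (𝓝 ⟪x - y, (WithLp.toLp 2 (A j) : EuclideanSpace ℝ (Fin n))⟫) :=
        (tendsto_const_nhds.sub h2).inner tendsto_const_nhds
      have h4 : Tendsto (fun _ : ℕ => (0:ℝ)) atTop
          (𝓝 ⟪x - y, (WithLp.toLp 2 (A j) : EuclideanSpace ℝ (Fin n))⟫) := by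
        simpa [hz] using h3
      exact (tendsto_nhds_unique h4 tendsto_const_nhds)
    have horthW : ∀ w ∈ W, ⟪x - y, w⟫ = 0 := by
      intro w hw
      induction hw using Submodule.span_induction with
      | mem w hw => obtain ⟨j, rfl⟩ := hw; exact horthy j
      | zero => simp
      | add u v _ _ hu hv => rw [inner_add_right, hu, hv]; ring
      | smul a u _ hu => rw [real_inner_smul_right, hu]; ring
    have hyx : y = xbar := by
      have hmem' : xbar - y ∈ W := Submodule.sub_mem _ hxbarmem hyW
      have h1 := horthW _ hmem'
      have h2 := hxbarorth _ hmem'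
      have h3 : ⟪xbar - y, xbar - y⟫ = 0 := by
        have hdec : xbar - y = (x - y) - (x - xbar) := by abel
        nth_rewrite 1 [hdec]
        rw [inner_sub_left, h1, h2, sub_zero]
      have h4 : xbar - y = 0 := inner_self_eq_zero.1 h3
      have := sub_eq_zero.1 h4
      exact this.symm
    rw [← hyx]
    exact hyt'
  refine ⟨hmain, ?_⟩
  intro hmn hA
  subst hmn
  rw [show A.submatrix id (Fin.cast rfl) = A by simp [Matrix.submatrix_id_id]] at hA
  have hdet : IsUnit Aᵀ.det := by
    rw [Matrix.det_transpose]
    exact (Matrix.isUnit_iff_isUnit_det A).1 hA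
  have hWtop : W = ⊤ := by
    rw [eq_top_iff]
    intro v _
    have hv : (WithLp.toLp 2 (Aᵀ.mulVec (WithLp.toLp 2 (Aᵀ⁻¹.mulVec v) : EuclideanSpace ℝ (Fin m)).ofLp) : EuclideanSpace ℝ (Fin m)) = v := by
      rw [WithLp.ofLp_toLp, Matrix.mulVec_mulVec, Matrix.mul_nonsing_inv _ hdet, Matrix.one_mulVec]
    rw [← hv]
    exact hmulW _
  have hx_eq : xbar = x := by
    have hxW' : x - xbar ∈ W := hWtop ▸ Submodule.mem_top
    have h1 := hxbarorth _ hxW'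
    have h2 : x - xbar = 0 := inner_self_eq_zero.1 h1
    have := sub_eq_zero.1 h2
    exact this.symm
  rw [← hx_eq]
  exact hmain
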